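/- Let ρ, T : (0,∞) → ℝ be twice differentiable with T(λ) > 0 and T'(λ) > 0 for all λ > 0. Suppose at λ* > 0 the function G(λ) = ρ(λ)/T(λ)² has a critical point (G'(λ*) = 0) and additionally ρ(λ*)/T(λ*) = s². Then ρ'(λ*) = 2s² T'(λ*), i.e., λ* is a critical point of the SURE function SURE(λ) = ρ(λ) + m s² - 2s² T(λ). -/

import Mathlib

/-- If `G(λ) = ρ(λ)/T(λ)²` has a critical point at `λ* > 0` with `ρ(λ*)/T(λ*) = s²`,
then `ρ'(λ*) = 2s² T'(λ*)`, i.e. `λ*` is a critical point of the SURE function. -/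
theorem stmt_16 (ρ T : ℝ → ℝ)
    (hρdiff : ∀ l : ℝ, 0 < l → DifferentiableAt ℝ ρ l ∧ DifferentiableAt ℝ (deriv ρ) l)
    (hTdiff : ∀ l : ℝ, 0 < l → DifferentiableAt ℝ T l ∧ DifferentiableAt ℝ (deriv T) l)
    (hTpos : ∀ l : ℝ, 0 < l → 0 < T l)
    (hT' : ∀ l : ℝ, 0 < l → 0 < deriv T l)
    (lstar : ℝ) (hlstar : 0 < lstar)
    (hcrit : deriv (fun l => ρ l / (T l)^2) lstar = 0)
    (s : ℝ) (hs : 0 < s) (hkey : ρ lstar / T lstar = s^2) :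
    deriv ρ lstar = 2 * s^2 * deriv T lstar := by
  have hρd := (hρdiff lstar hlstar).1
  have hTd := (hTdiff lstar hlstar).1
  have hTpos' := hTpos lstar hlstar
  have hTne : T lstar ≠ 0 := ne_of_gt hTpos'
  have hT2d : DifferentiableAt ℝ (fun l => (T l)^2) lstar := hTd.pow 2
  have hT2ne : (T lstar)^2 ≠ 0 := pow_ne_zero 2 hTne
  have hderiv : deriv (fun l => ρ l / (T l)^2) lstar
      = (deriv ρ lstar * (T lstar)^2 - ρ lstar * (2 * T lstar * deriv T lstar))
        / ((T lstar)^2)^2 := by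
    rw [show (fun l => ρ l / (T l)^2) = ρ / (fun l => (T l)^2) from rfl, deriv_div hρd hT2d hT2ne]
    congr 1
    congr 1
    have : deriv (fun l => (T l)^2) lstar = 2 * T lstar ^ 1 * deriv T lstar := by
      exact (hTd.hasDerivAt.pow 2 : HasDerivAt (fun l => (T l)^2) _ lstar).deriv.trans (by norm_num)
    rw [this]; ring
  rw [hderiv] at hcrit
  have hnum : deriv ρ lstar * (T lstar)^2 - ρ lstar * (2 * T lstar * deriv T lstar) = 0 := by
    field_simp at hcrit
    linear_combination T lstar * hcrit
  have hρval : ρ lstar = s^2 * T lstar := by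
    field_simp at hkey; linarith [hkey]
  rw [hρval] at hnum
  have h2 : (T lstar)^2 * (deriv ρ lstar - 2 * s^2 * deriv T lstar) = 0 := by ring_nf; ring_nf at hnum; linarith
  have := mul_eq_zero.mp h2
  rcases this with h | h
  · exact absurd h hT2ne
  · linarith
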